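/- Let $\rho \in \mathbb{R}$, let $f$ be a real polynomial, and define $g(x) = x f'(x) - \rho f(x)$ (also a real polynomial). If $f$ has at least $r$ roots in $(0,1]$, counted with multiplicity, then $g$ has at least $r - 1$ roots in $(0,1]$, counted with multiplicity. -/

import Mathlib

open scoped Classical

open Polynomial Set

/-- Auxiliary: sum of counts over any finset is at most the multiset's card. -/
lemma sum_count_le_card' {α : Type*} [DecidableEq α] (s : Finset α) (M : Multiset α) :
    ∑ x ∈ s, M.count x ≤ Multiset.card M := by
  calc ∑ x ∈ s, M.count x = ∑ x ∈ s ∩ M.toFinset, M.count x := by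
        refine (Finset.sum_subset (Finset.inter_subset_left) fun x hx hx' => ?_).symm
        rw [Multiset.count_eq_zero]
        intro hxM
        exact hx' (Finset.mem_inter.2 ⟨hx, Multiset.mem_toFinset.2 hxM⟩)
    _ ≤ ∑ x ∈ M.toFinset, M.count x :=
        Finset.sum_le_sum_of_subset Finset.inter_subset_right
    _ = Multiset.card M := M.toFinset_sum_count_eq

/-- Key multiplicity lemma: at a nonzero root `a` of `f ≠ 0`, the polynomial
`g = X f' - ρ f` is nonzero and has root multiplicity at least `m - 1`. -/
lemma key_mult (ρ a : ℝ) (f : Polynomial ℝ) (hf : f ≠ 0) (ha : a ≠ 0)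
    (haroot : f.IsRoot a) :
    (X * f.derivative - C ρ * f) ≠ 0 ∧
      f.rootMultiplicity a - 1 ≤ (X * f.derivative - C ρ * f).rootMultiplicity a := by
  set m := f.rootMultiplicity a with hm
  have hm1 : 1 ≤ m := (rootMultiplicity_pos hf).2 haroot
  obtain ⟨k, hk⟩ : ∃ k, m = k + 1 := ⟨m - 1, (Nat.sub_add_cancel hm1).symm⟩
  set h := f /ₘ (X - C a) ^ m with hh
  have hfe : (X - C a) ^ m * h = f := f.pow_mul_divByMonic_rootMultiplicity_eq a
  have hha : h.eval a ≠ 0 := eval_divByMonic_pow_rootMultiplicity_ne_zero a hf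
  set q : Polynomial ℝ :=
    C ((k : ℝ) + 1) * X * h + (X - C a) * (X * h.derivative - C ρ * h) with hq
  have hgq : X * f.derivative - C ρ * f = (X - C a) ^ k * q := by
    rw [← hfe, hk]
    simp only [hq, derivative_mul, derivative_pow, derivative_X_sub_C, Nat.add_sub_cancel,
      Nat.cast_add, Nat.cast_one, map_add, map_one, mul_one]
    ring
  have hqa : q.eval a ≠ 0 := by
    have : q.eval a = ((k : ℝ) + 1) * a * h.eval a := by simp [hq]
    rw [this]
    exact mul_ne_zero (mul_ne_zero (by positivity) ha) hha
  have hq0 : q ≠ 0 := fun h0 => hqa (by simp [h0])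
  have hg0 : X * f.derivative - C ρ * f ≠ 0 := by
    rw [hgq]
    exact mul_ne_zero (pow_ne_zero _ (X_sub_C_ne_zero a)) hq0
  refine ⟨hg0, ?_⟩
  rw [le_rootMultiplicity_iff hg0]
  exact hk ▸ ⟨q, hgq⟩

/-- Rolle step for `D_ρ`: between two positive roots of `f` there is a root of
`g = X f' - ρ f`. -/
lemma rolle_step (ρ : ℝ) (f : Polynomial ℝ) {x y : ℝ} (hx : 0 < x) (hxy : x < y)
    (hfx : f.IsRoot x) (hfy : f.IsRoot y) :
    ∃ z ∈ Set.Ioo x y, (X * f.derivative - C ρ * f).IsRoot z := by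
  set F : ℝ → ℝ := fun t => t ^ (-ρ) * f.eval t with hF
  have hcont : ContinuousOn F (Set.Icc x y) := by
    apply ContinuousOn.mul
    · exact continuousOn_id.rpow_const fun t ht =>
        Or.inl (ne_of_gt (lt_of_lt_of_le hx ht.1))
    · exact f.continuousOn_aeval.congr fun t _ => by simp
  have hFx : F x = F y := by simp [hF, hfx.eq_zero, hfy.eq_zero]
  have hderiv : ∀ z ∈ Set.Ioo x y, HasDerivAt F
      ((-ρ) * z ^ (-ρ - 1) * f.eval z + z ^ (-ρ) * f.derivative.eval z) z := by
    intro z hz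
    have hz0 : (0 : ℝ) < z := hx.trans hz.1
    exact ((Real.hasDerivAt_rpow_const (Or.inl hz0.ne')).mul (f.hasDerivAt z))
  obtain ⟨z, hzmem, hz⟩ := exists_hasDerivAt_eq_zero hxy hcont hFx hderiv
  refine ⟨z, hzmem, ?_⟩
  have hz0 : (0 : ℝ) < z := hx.trans hzmem.1
  have hsplit : z ^ (-ρ) = z ^ (-ρ - 1) * z := by
    have h1 := Real.rpow_add hz0 (-ρ - 1) 1
    rw [Real.rpow_one, show -ρ - 1 + 1 = -ρ by ring] at h1
    exact h1
  rw [hsplit] at hz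
  have hzne : z ^ (-ρ - 1) ≠ 0 := (Real.rpow_pos_of_pos hz0 _).ne'
  have : z ^ (-ρ - 1) * (z * f.derivative.eval z - ρ * f.eval z) = 0 := by
    rw [← hz]; ring
  have h2 : z * f.derivative.eval z - ρ * f.eval z = 0 := by
    rcases mul_eq_zero.1 this with h | h
    · exact absurd h hzne
    · exact h
  simpa [Polynomial.IsRoot] using h2

/-- If `f` has at least `r` roots in `(0,1]` counted with multiplicity, then
`g(x) = x f'(x) - ρ f(x)` has at least `r - 1` roots in `(0,1]` counted with
multiplicity. -/
theorem root_count_after_D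
    (ρ : ℝ) (f : Polynomial ℝ) (r : ℕ)
    (hf : r ≤ ((f.roots.filter fun x => x ∈ Set.Ioc (0 : ℝ) 1)).card) :
    r - 1 ≤
      (((Polynomial.X * f.derivative - Polynomial.C ρ * f).roots.filter
        fun x => x ∈ Set.Ioc (0 : ℝ) 1)).card := by
  set g : Polynomial ℝ := X * f.derivative - C ρ * f with hg
  set Fm := f.roots.filter (fun x => x ∈ Set.Ioc (0 : ℝ) 1) with hFm
  set Gm := g.roots.filter (fun x => x ∈ Set.Ioc (0 : ℝ) 1) with hGm
  rcases Nat.eq_zero_or_pos (Multiset.card Fm) with hF0 | hFpos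
  · omega
  -- there is a root of f in (0,1], so f ≠ 0 and g ≠ 0
  obtain ⟨a, haF⟩ := Multiset.card_pos_iff_exists_mem.1 hFpos
  have haF' := haF
  rw [hFm, Multiset.mem_filter] at haF'
  have hf0 : f ≠ 0 := by
    intro h0; rw [h0, Polynomial.roots_zero] at haF'; exact absurd haF'.1 (by simp)
  have hfa : f.IsRoot a := (Polynomial.mem_roots hf0).1 haF'.1
  have hg0 : g ≠ 0 := (key_mult ρ a f hf0 (ne_of_gt haF'.2.1) hfa).1
  set S := Fm.toFinset with hS
  set T := Gm.toFinset with hT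
  -- interleaving
  have hinter : S.card ≤ (T \ S).card + 1 := by
    refine Finset.card_le_diff_of_interleaved fun x hx y hy hxy _ => ?_
    rw [hS, hFm, Multiset.mem_toFinset, Multiset.mem_filter, Polynomial.mem_roots hf0] at hx hy
    obtain ⟨z, hzmem, hzroot⟩ := rolle_step ρ f hx.2.1 hxy hx.1 hy.1
    refine ⟨z, ?_, hzmem.1, hzmem.2⟩
    rw [hT, hGm, Multiset.mem_toFinset, Multiset.mem_filter, Polynomial.mem_roots hg0]
    exact ⟨hzroot, hx.2.1.trans hzmem.1, hzmem.2.le.trans hy.2.2⟩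
  -- counts
  have hcountF : ∀ x ∈ S, Fm.count x = f.rootMultiplicity x := by
    intro x hx
    rw [hS, Multiset.mem_toFinset, hFm, Multiset.mem_filter] at hx
    rw [hFm, Multiset.count_filter, if_pos hx.2, Polynomial.count_roots]
  have hcountG : ∀ x, x ∈ Set.Ioc (0:ℝ) 1 → Gm.count x = g.rootMultiplicity x := by
    intro x hx
    rw [hGm, Multiset.count_filter, if_pos hx, Polynomial.count_roots]
  have hstep : ∀ x ∈ S, Fm.count x - 1 ≤ Gm.count x := by
    intro x hx
    have hx' := hx
    rw [hS, Multiset.mem_toFinset, hFm, Multiset.mem_filter] at hx'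
    have hxroot : f.IsRoot x := (Polynomial.mem_roots hf0).1 hx'.1
    rw [hcountF x hx, hcountG x hx'.2]
    exact (key_mult ρ x f hf0 (ne_of_gt hx'.2.1) hxroot).2
  -- main chain
  have hmain : Multiset.card Fm ≤ Multiset.card Gm + 1 := by
    calc Multiset.card Fm = ∑ x ∈ S, Fm.count x := (Fm.toFinset_sum_count_eq).symm
      _ = ∑ x ∈ S, (Fm.count x - 1 + 1) := by
          refine Finset.sum_congr rfl fun x hx => ?_
          have : 0 < Fm.count x := Multiset.count_pos.2 (Multiset.mem_toFinset.1 hx)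
          omega
      _ = (∑ x ∈ S, (Fm.count x - 1)) + S.card := by
          rw [Finset.sum_add_distrib, Finset.card_eq_sum_ones]
      _ ≤ (∑ x ∈ S, Gm.count x) + ((T \ S).card + 1) :=
          add_le_add (Finset.sum_le_sum hstep) hinter
      _ ≤ (∑ x ∈ S, Gm.count x) + ((∑ z ∈ T \ S, Gm.count z) + 1) := by
          refine add_le_add_right (add_le_add_left ?_ 1) _
          rw [Finset.card_eq_sum_ones]
          refine Finset.sum_le_sum fun z hz => ?_
          rw [Nat.succ_le_iff, Multiset.count_pos]
          exact Multiset.mem_toFinset.1 (Finset.mem_sdiff.1 hz).1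
      _ = (∑ x ∈ S ∪ (T \ S), Gm.count x) + 1 := by
          rw [Finset.sum_union Finset.disjoint_sdiff]
          ring
      _ ≤ Multiset.card Gm + 1 :=
          add_le_add_left (sum_count_le_card' _ _) 1
  omega
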